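/- (Proposition 1.) Consider the non-competitive two-phase problem of maximizing F₁(x¹, x²) := F(x¹, x², 0, 0) over the feasible set {(x¹, x²) ∈ ℝⁿ × ℝⁿ : x¹_i ≥ 0 and x²_i ≥ 0 for all i, and Σ_i (x¹_i + x²_i) ≤ k_g}, where k_g > 0. Then the maximum is attained, and it is attained at some point (x¹, x²) such that x¹ has at most one nonzero coordinate, x² has at most one nonzero coordinate, and either Σ_i (x¹_i + x²_i) = k_g or x¹ = x² = 0. -/
import Mathlib


/-- The two-phase objective function `F(x¹,x²,y¹,y²)` (the sum of final opinions). -/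
noncomputable def twoPhaseF (n : ℕ) (θ c r s : Fin n → ℝ)
    (b : Matrix (Fin n) (Fin n) ℝ) (x1 x2 y1 y2 : Fin n → ℝ) : ℝ :=
  (∑ i, ∑ j, c i * b j i)
  + (∑ j, x2 j * (θ j / 2) * ((∑ i, c i * b j i) + r j))
  + (∑ j, y2 j * (θ j / 2) * ((∑ i, c i * b j i) - r j))
  + (∑ i, x1 i * (θ i / 2) * (1 + c i) *
      (s i + ∑ j, (x2 j + y2 j) * (θ j / 2) * b j i))
  - (∑ i, y1 i * (θ i / 2) * (1 - c i) *
      (s i + ∑ j, (x2 j + y2 j) * (θ j / 2) * b j i))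

noncomputable def coefB {n : ℕ} (θ c s : Fin n → ℝ) (b : Matrix (Fin n) (Fin n) ℝ)
    (x2 : Fin n → ℝ) (i : Fin n) : ℝ :=
  θ i / 2 * (1 + c i) * (s i + ∑ j, x2 j * (θ j / 2) * b j i)

noncomputable def coefC {n : ℕ} (θ c r : Fin n → ℝ) (b : Matrix (Fin n) (Fin n) ℝ)
    (x1 : Fin n → ℝ) (j : Fin n) : ℝ :=
  θ j / 2 * ((∑ i, c i * b j i) + r j)
    + ∑ i, x1 i * (θ i / 2 * (1 + c i) * (θ j / 2 * b j i))

lemma tpB {n : ℕ} (θ c r s : Fin n → ℝ) (b : Matrix (Fin n) (Fin n) ℝ) (x1 x2 : Fin n → ℝ) :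
    twoPhaseF n θ c r s b x1 x2 0 0 =
      ((∑ i, ∑ j, c i * b j i) + ∑ j, x2 j * (θ j / 2) * ((∑ i, c i * b j i) + r j))
        + ∑ i, x1 i * coefB θ c s b x2 i := by
  simp only [twoPhaseF, coefB, Pi.zero_apply, zero_mul, mul_zero, zero_add, add_zero,
    Finset.sum_const_zero, sub_zero]
  congr 1
  exact Finset.sum_congr rfl fun i _ => by ring

lemma tpC {n : ℕ} (θ c r s : Fin n → ℝ) (b : Matrix (Fin n) (Fin n) ℝ) (x1 x2 : Fin n → ℝ) :
    twoPhaseF n θ c r s b x1 x2 0 0 =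
      ((∑ i, ∑ j, c i * b j i) + ∑ i, x1 i * (θ i / 2 * (1 + c i) * s i))
        + ∑ j, x2 j * coefC θ c r b x1 j := by
  rw [tpB]
  have h1 : ∑ i, x1 i * coefB θ c s b x2 i
      = (∑ i, x1 i * (θ i / 2 * (1 + c i) * s i))
        + ∑ i, ∑ j, x2 j * (x1 i * (θ i / 2 * (1 + c i) * (θ j / 2 * b j i))) := by
    rw [← Finset.sum_add_distrib]
    refine Finset.sum_congr rfl fun i _ => ?_
    rw [coefB, mul_add, mul_add, Finset.mul_sum, Finset.mul_sum]
    congr 1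
    exact Finset.sum_congr rfl fun j _ => by ring
  have h2 : ∑ j, x2 j * coefC θ c r b x1 j
      = (∑ j, x2 j * (θ j / 2 * ((∑ i, c i * b j i) + r j)))
        + ∑ j, ∑ i, x2 j * (x1 i * (θ i / 2 * (1 + c i) * (θ j / 2 * b j i))) := by
    rw [← Finset.sum_add_distrib]
    refine Finset.sum_congr rfl fun j _ => ?_
    rw [coefC, mul_add, Finset.mul_sum]
  have hD : (∑ i, ∑ j, x2 j * (x1 i * (θ i / 2 * (1 + c i) * (θ j / 2 * b j i))))
      = ∑ j, ∑ i, x2 j * (x1 i * (θ i / 2 * (1 + c i) * (θ j / 2 * b j i))) :=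
    Finset.sum_comm
  have h3 : ∑ j, x2 j * (θ j / 2) * ((∑ i, c i * b j i) + r j)
      = ∑ j, x2 j * (θ j / 2 * ((∑ i, c i * b j i) + r j)) :=
    Finset.sum_congr rfl fun j _ => by ring
  rw [h1, h2, hD, h3]; ring

/-- Proposition 1: in the non-competitive case, the maximum of
`F(x¹,x²,0,0)` over the budget-feasible set is attained at a point where each
phase's investment vector has at most one nonzero coordinate, and either the
whole budget is exhausted or nothing is invested at all. -/
theorem prop1_single_camp (n : ℕ) (hn : 0 < n)
    (W : Matrix (Fin n) (Fin n) ℝ)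
    (hW : ∀ i, ∑ j, |W i j| < 1)
    (w0 θ z0 : Fin n → ℝ)
    (Δ : Matrix (Fin n) (Fin n) ℝ) (hΔ : Δ = (1 - W)⁻¹)
    (r : Fin n → ℝ) (hr : ∀ i, r i = ∑ j, Δ j i)
    (c : Fin n → ℝ) (hc : ∀ i, c i = w0 i * z0 i)
    (b : Matrix (Fin n) (Fin n) ℝ) (hb : ∀ j i, b j i = r j * w0 j * Δ j i)
    (s : Fin n → ℝ) (hs : ∀ i, s i = ∑ j, b j i)
    (kg : ℝ) (hkg : 0 < kg) :
    ∃ x1 x2 : Fin n → ℝ,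
      (∀ i, 0 ≤ x1 i) ∧ (∀ i, 0 ≤ x2 i) ∧ (∑ i, (x1 i + x2 i)) ≤ kg ∧
      (∀ x1' x2' : Fin n → ℝ,
        (∀ i, 0 ≤ x1' i) → (∀ i, 0 ≤ x2' i) → (∑ i, (x1' i + x2' i)) ≤ kg →
        twoPhaseF n θ c r s b x1' x2' 0 0 ≤ twoPhaseF n θ c r s b x1 x2 0 0) ∧
      (∀ i j, x1 i ≠ 0 → x1 j ≠ 0 → i = j) ∧
      (∀ i j, x2 i ≠ 0 → x2 j ≠ 0 → i = j) ∧
      ((∑ i, (x1 i + x2 i)) = kg ∨ (x1 = 0 ∧ x2 = 0)) := by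
  classical
  haveI hne : Nonempty (Fin n) := ⟨⟨0, hn⟩⟩
  set S : Set ((Fin n → ℝ) × (Fin n → ℝ)) :=
    {p | (∀ i, 0 ≤ p.1 i) ∧ (∀ i, 0 ≤ p.2 i) ∧ (∑ i, (p.1 i + p.2 i)) ≤ kg} with hSdef
  -- S is closed
  have hclosed : IsClosed S := by
    have h1 : IsClosed {p : (Fin n → ℝ) × (Fin n → ℝ) | ∀ i, 0 ≤ p.1 i} := by
      rw [Set.setOf_forall]
      exact isClosed_iInter fun i =>
        isClosed_le continuous_const ((continuous_apply i).comp continuous_fst)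
    have h2 : IsClosed {p : (Fin n → ℝ) × (Fin n → ℝ) | ∀ i, 0 ≤ p.2 i} := by
      rw [Set.setOf_forall]
      exact isClosed_iInter fun i =>
        isClosed_le continuous_const ((continuous_apply i).comp continuous_snd)
    have h3 : IsClosed {p : (Fin n → ℝ) × (Fin n → ℝ) | (∑ i, (p.1 i + p.2 i)) ≤ kg} :=
      isClosed_le (continuous_finset_sum _ fun i _ =>
        ((continuous_apply i).comp continuous_fst).add
          ((continuous_apply i).comp continuous_snd)) continuous_const
    exact h1.inter (h2.inter h3)
  -- S is bounded
  have hbdd : Bornology.IsBounded S := by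
    apply (Metric.isBounded_closedBall (x := (0 : (Fin n → ℝ) × (Fin n → ℝ))) (r := kg)).subset
    rintro p ⟨h1, h2, h3⟩
    have hb' : ∀ i, p.1 i + p.2 i ≤ kg := by
      intro i
      calc p.1 i + p.2 i ≤ ∑ i, (p.1 i + p.2 i) :=
            Finset.single_le_sum (fun i _ => add_nonneg (h1 i) (h2 i)) (Finset.mem_univ i)
        _ ≤ kg := h3
    rw [Metric.mem_closedBall, dist_zero_right, Prod.norm_def]
    refine max_le ?_ ?_ <;> rw [pi_norm_le_iff_of_nonneg hkg.le] <;> intro i <;>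
      rw [Real.norm_eq_abs, abs_le] <;> constructor
    · linarith [h1 i, hkg]
    · linarith [h1 i, h2 i, hb' i]
    · linarith [h2 i, hkg]
    · linarith [h1 i, h2 i, hb' i]
  have hScompact : IsCompact S := Metric.isCompact_of_isClosed_isBounded hclosed hbdd
  have h0S : ((0, 0) : (Fin n → ℝ) × (Fin n → ℝ)) ∈ S := by
    refine ⟨fun i => le_refl 0, fun i => le_refl 0, ?_⟩
    simp [hkg.le]
  have hcont : Continuous fun p : (Fin n → ℝ) × (Fin n → ℝ) =>
      twoPhaseF n θ c r s b p.1 p.2 0 0 := by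
    simp only [twoPhaseF]
    fun_prop
  obtain ⟨p, hpS, hpmax⟩ :=
    hScompact.exists_isMaxOn ⟨(0, 0), h0S⟩ hcont.continuousOn
  have hmax : ∀ x1' x2' : Fin n → ℝ,
      (∀ i, 0 ≤ x1' i) → (∀ i, 0 ≤ x2' i) → (∑ i, (x1' i + x2' i)) ≤ kg →
      twoPhaseF n θ c r s b x1' x2' 0 0 ≤ twoPhaseF n θ c r s b p.1 p.2 0 0 :=
    fun x1' x2' h1 h2 h3 => isMaxOn_iff.mp hpmax (x1', x2') ⟨h1, h2, h3⟩
  obtain ⟨hp1, hp2, hpsum⟩ := hpS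
  -- Step 1: concentrate x1
  obtain ⟨i0, -, hi0⟩ :=
    Finset.exists_max_image Finset.univ (coefB θ c s b p.2) Finset.univ_nonempty
  set T1 := ∑ i, p.1 i with hT1
  have hT1nn : 0 ≤ T1 := Finset.sum_nonneg fun i _ => hp1 i
  set x1a : Fin n → ℝ := fun i => if i = i0 then T1 else 0 with hx1adef
  have hx1ann : ∀ i, 0 ≤ x1a i := by
    intro i; by_cases h : i = i0 <;> simp [hx1adef, h, hT1nn]
  have hx1asum : ∑ i, x1a i = T1 := by simp [hx1adef]
  have hx1aB : ∀ B : Fin n → ℝ, ∑ i, x1a i * B i = T1 * B i0 := by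
    intro B; simp [hx1adef, ite_mul]
  have hstep1 : twoPhaseF n θ c r s b p.1 p.2 0 0 ≤ twoPhaseF n θ c r s b x1a p.2 0 0 := by
    rw [tpB, tpB]
    have h : ∑ i, p.1 i * coefB θ c s b p.2 i ≤ ∑ i, x1a i * coefB θ c s b p.2 i := by
      rw [hx1aB, hT1, Finset.sum_mul]
      exact Finset.sum_le_sum fun i _ =>
        mul_le_mul_of_nonneg_left (hi0 i (Finset.mem_univ i)) (hp1 i)
    linarith
  -- Step 2: concentrate x2
  obtain ⟨j0, -, hj0⟩ :=
    Finset.exists_max_image Finset.univ (coefC θ c r b x1a) Finset.univ_nonempty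
  set T2 := ∑ j, p.2 j with hT2
  have hT2nn : 0 ≤ T2 := Finset.sum_nonneg fun j _ => hp2 j
  set x2a : Fin n → ℝ := fun j => if j = j0 then T2 else 0 with hx2adef
  have hx2ann : ∀ j, 0 ≤ x2a j := by
    intro j; by_cases h : j = j0 <;> simp [hx2adef, h, hT2nn]
  have hx2asum : ∑ j, x2a j = T2 := by simp [hx2adef]
  have hx2aC : ∀ C : Fin n → ℝ, ∑ j, x2a j * C j = T2 * C j0 := by
    intro C; simp [hx2adef, ite_mul]
  have hstep2 : twoPhaseF n θ c r s b x1a p.2 0 0 ≤ twoPhaseF n θ c r s b x1a x2a 0 0 := by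
    rw [tpC, tpC]
    have h : ∑ j, p.2 j * coefC θ c r b x1a j ≤ ∑ j, x2a j * coefC θ c r b x1a j := by
      rw [hx2aC, hT2, Finset.sum_mul]
      exact Finset.sum_le_sum fun j _ =>
        mul_le_mul_of_nonneg_left (hj0 j (Finset.mem_univ j)) (hp2 j)
    linarith
  have hsum_a : ∑ i, (x1a i + x2a i) = T1 + T2 := by
    rw [Finset.sum_add_distrib, hx1asum, hx2asum]
  have hsum_p : ∑ i, (p.1 i + p.2 i) = T1 + T2 := by
    rw [Finset.sum_add_distrib, ← hT1, ← hT2]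
  have hfeas_a : ∑ i, (x1a i + x2a i) ≤ kg := by rw [hsum_a, ← hsum_p]; exact hpsum
  have hopt : ∀ x1' x2' : Fin n → ℝ,
      (∀ i, 0 ≤ x1' i) → (∀ i, 0 ≤ x2' i) → (∑ i, (x1' i + x2' i)) ≤ kg →
      twoPhaseF n θ c r s b x1' x2' 0 0 ≤ twoPhaseF n θ c r s b x1a x2a 0 0 :=
    fun x1' x2' h1 h2 h3 => le_trans (hmax x1' x2' h1 h2 h3) (le_trans hstep1 hstep2)
  rcases eq_or_lt_of_le hfeas_a with heq | hlt
  · -- budget exhausted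
    refine ⟨x1a, x2a, hx1ann, hx2ann, hfeas_a, hopt, ?_, ?_, Or.inl heq⟩
    · intro i j hi hj
      have hii : i = i0 := by by_contra h; simp [hx1adef, h] at hi
      have hjj : j = i0 := by by_contra h; simp [hx1adef, h] at hj
      rw [hii, hjj]
    · intro i j hi hj
      have hii : i = j0 := by by_contra h; simp [hx2adef, h] at hi
      have hjj : j = j0 := by by_contra h; simp [hx2adef, h] at hj
      rw [hii, hjj]
  · -- slack: show (0,0) is optimal
    -- all x2-coefficients at x1a are ≤ 0
    have hCle : ∀ jj, coefC θ c r b x1a jj ≤ 0 := by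
      intro jj
      set ε := kg - ∑ i, (x1a i + x2a i) with hεdef
      have hεpos : 0 < ε := sub_pos.2 hlt
      set x2' : Fin n → ℝ := fun t => x2a t + if t = jj then ε else 0 with hx2'def
      have h2' : ∀ i, 0 ≤ x2' i := by
        intro i
        by_cases h : i = jj
        · have hv : x2' i = x2a jj + ε := by simp [hx2'def, h]
          rw [hv]; linarith [hx2ann jj]
        · simp only [hx2'def, if_neg h, add_zero]
          exact hx2ann i
      have hsum' : ∑ i, (x1a i + x2' i) ≤ kg := by
        have heq2 : ∑ i, (x1a i + x2' i)
            = (∑ i, (x1a i + x2a i)) + ∑ i, (if i = jj then ε else 0) := by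
          rw [← Finset.sum_add_distrib]
          exact Finset.sum_congr rfl fun i _ => by simp only [hx2'def]; ring
        have hεsum : ∑ i, (if i = jj then ε else 0) = ε := by simp
        rw [heq2, hεsum, hεdef]
        linarith
      have hle := hopt x1a x2' hx1ann h2' hsum'
      rw [tpC, tpC] at hle
      have hsplit : ∑ t, x2' t * coefC θ c r b x1a t
          = (∑ t, x2a t * coefC θ c r b x1a t) + ε * coefC θ c r b x1a jj := by
        have : ∀ t, x2' t * coefC θ c r b x1a t
            = x2a t * coefC θ c r b x1a t + (if t = jj then ε else 0) * coefC θ c r b x1a t := by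
          intro t; simp only [hx2'def]; ring
        rw [Finset.sum_congr rfl fun t _ => this t, Finset.sum_add_distrib]
        congr 1
        simp [ite_mul]
      rw [hsplit] at hle
      nlinarith
    have hstep3 : twoPhaseF n θ c r s b x1a x2a 0 0 ≤ twoPhaseF n θ c r s b x1a 0 0 0 := by
      rw [tpC, tpC]
      have h0 : ∑ j, (0 : Fin n → ℝ) j * coefC θ c r b x1a j = 0 := by simp
      have hneg : ∑ j, x2a j * coefC θ c r b x1a j ≤ 0 :=
        Finset.sum_nonpos fun j _ => mul_nonpos_iff.2 (Or.inl ⟨hx2ann j, hCle j⟩)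
      linarith
    have hopt0 : ∀ x1' x2' : Fin n → ℝ,
        (∀ i, 0 ≤ x1' i) → (∀ i, 0 ≤ x2' i) → (∑ i, (x1' i + x2' i)) ≤ kg →
        twoPhaseF n θ c r s b x1' x2' 0 0 ≤ twoPhaseF n θ c r s b x1a 0 0 0 :=
      fun x1' x2' h1 h2 h3 => le_trans (hopt x1' x2' h1 h2 h3) hstep3
    have hsum0 : ∑ i, (x1a i + (0 : Fin n → ℝ) i) < kg := by
      simp only [Pi.zero_apply, add_zero]
      rw [hx1asum]
      rw [hsum_a] at hlt
      linarith
    have hBle : ∀ ii, coefB θ c s b 0 ii ≤ 0 := by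
      intro ii
      set ε := kg - ∑ i, (x1a i + (0 : Fin n → ℝ) i) with hεdef
      have hεpos : 0 < ε := sub_pos.2 hsum0
      set x1' : Fin n → ℝ := fun t => x1a t + if t = ii then ε else 0 with hx1'def
      have h1' : ∀ i, 0 ≤ x1' i := by
        intro i
        by_cases h : i = ii
        · have hv : x1' i = x1a ii + ε := by simp [hx1'def, h]
          rw [hv]; linarith [hx1ann ii]
        · simp only [hx1'def, if_neg h, add_zero]
          exact hx1ann i
      have hsum' : ∑ i, (x1' i + (0 : Fin n → ℝ) i) ≤ kg := by
        have heq2 : ∑ i, (x1' i + (0 : Fin n → ℝ) i)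
            = (∑ i, (x1a i + (0 : Fin n → ℝ) i)) + ∑ i, (if i = ii then ε else 0) := by
          rw [← Finset.sum_add_distrib]
          exact Finset.sum_congr rfl fun i _ => by simp only [hx1'def]; ring
        have hεsum : ∑ i, (if i = ii then ε else 0) = ε := by simp
        rw [heq2, hεsum, hεdef]
        linarith
      have hle := hopt0 x1' 0 h1' (fun i => le_refl 0) hsum'
      rw [tpB, tpB] at hle
      have hsplit : ∑ t, x1' t * coefB θ c s b 0 t
          = (∑ t, x1a t * coefB θ c s b 0 t) + ε * coefB θ c s b 0 ii := by
        have : ∀ t, x1' t * coefB θ c s b 0 t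
            = x1a t * coefB θ c s b 0 t + (if t = ii then ε else 0) * coefB θ c s b 0 t := by
          intro t; simp only [hx1'def]; ring
        rw [Finset.sum_congr rfl fun t _ => this t, Finset.sum_add_distrib]
        congr 1
        simp [ite_mul]
      rw [hsplit] at hle
      nlinarith
    have hstep4 : twoPhaseF n θ c r s b x1a 0 0 0 ≤ twoPhaseF n θ c r s b 0 0 0 0 := by
      rw [tpB, tpB]
      have h0 : ∑ i, (0 : Fin n → ℝ) i * coefB θ c s b 0 i = 0 := by simp
      have hneg : ∑ i, x1a i * coefB θ c s b 0 i ≤ 0 :=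
        Finset.sum_nonpos fun i _ => mul_nonpos_iff.2 (Or.inl ⟨hx1ann i, hBle i⟩)
      linarith
    refine ⟨0, 0, fun i => le_refl 0, fun i => le_refl 0, ?_, ?_, ?_, ?_, Or.inr ⟨rfl, rfl⟩⟩
    · simp [hkg.le]
    · exact fun x1' x2' h1 h2 h3 => le_trans (hopt0 x1' x2' h1 h2 h3) hstep4
    · intro i j hi; simp at hi
    · intro i j hi; simp at hi
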